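/- arXiv:2203.04720 — 2 statements merged into one kernel-verified Lean document; each statement's English description precedes it below -/
import Mathlib

section
/- Let 1 ≤ q⃗ = (q_1,…,q_n) < ∞ (componentwise) and let q⃗′ = (q_1′,…,q_n′) be the conjugate exponents, 1/q_j + 1/q_j′ = 1. There is a constant C > 0, depending only on n and q⃗, such that for every x_0 ∈ ℝ^n, every r > 0, and every measurable f on ℝ^n that lies locally in L^{q⃗}, ∫_{{y : |x_0−y| ≥ 2r}} |f(y)| · |x_0−y|^{−n} dy ≤ C ∫_{2r}^∞ t^{−1−Σ_{j=1}^n 1/q_j} ‖f‖_{L^{q⃗}(B(x_0,t))} dt. -/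
open MeasureTheory ENNReal Set

noncomputable section

/-- Euclidean distance on `Fin n → ℝ`. -/
def eudist (n : ℕ) (x y : Fin n → ℝ) : ℝ :=
  Real.sqrt (∑ i, (x i - y i) ^ 2)

/-- Open Euclidean ball in `Fin n → ℝ`. -/
def eball (n : ℕ) (x : Fin n → ℝ) (r : ℝ) : Set (Fin n → ℝ) :=
  {y | eudist n x y < r}

/-- Iterated mixed Lebesgue "norm" of an `ℝ≥0∞`-valued function: the innermost
integration is in the first coordinate with exponent `q 0`, the outermost in the
last coordinate with exponent `q (n-1)`. -/
def mixedLnorm : (n : ℕ) → (Fin n → ℝ) → ((Fin n → ℝ) → ℝ≥0∞) → ℝ≥0∞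
  | 0, _, g => g (fun i => i.elim0)
  | (n + 1), q, g =>
      (∫⁻ t : ℝ, (mixedLnorm n (fun i => q i.castSucc)
          (fun y => g (Fin.snoc y t))) ^ q (Fin.last n)) ^ (1 / q (Fin.last n))

/-- Mixed Lebesgue norm `‖f‖_{L^{q⃗}}` of a real-valued function on `ℝ^n`. -/
def mixedNorm (n : ℕ) (q : Fin n → ℝ) (f : (Fin n → ℝ) → ℝ) : ℝ≥0∞ :=
  mixedLnorm n q (fun x => ENNReal.ofReal |f x|)

/-- Generalized mixed Morrey norm of an `ℝ≥0∞`-valued function. -/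
def morreyLnorm (n : ℕ) (q : Fin n → ℝ) (φ : (Fin n → ℝ) → ℝ → ℝ)
    (g : (Fin n → ℝ) → ℝ≥0∞) : ℝ≥0∞ :=
  ⨆ (x : Fin n → ℝ) (r : ℝ) (_ : 0 < r),
    (ENNReal.ofReal (φ x r))⁻¹
      * (mixedNorm n q ((eball n x r).indicator fun _ => (1 : ℝ)))⁻¹
      * mixedLnorm n q ((eball n x r).indicator g)

/-- Generalized mixed Morrey norm `‖f‖_{M^φ_{q⃗}}` of a real-valued function. -/
def morreyNorm (n : ℕ) (q : Fin n → ℝ) (φ : (Fin n → ℝ) → ℝ → ℝ)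
    (f : (Fin n → ℝ) → ℝ) : ℝ≥0∞ :=
  morreyLnorm n q φ (fun x => ENNReal.ofReal |f x|)

/-- The BMO norm (as an extended real number). -/
def bmoNorm (n : ℕ) (b : (Fin n → ℝ) → ℝ) : ℝ≥0∞ :=
  ⨆ (x : Fin n → ℝ) (r : ℝ) (_ : 0 < r),
    ENNReal.ofReal ((volume (eball n x r)).toReal⁻¹
      * ∫ y in eball n x r, |b y - ⨍ z in eball n x r, b z|)

/-- Sublinearity in each entry of a multi-(sub)linear operator. -/
def EntrywiseSublinear (n m : ℕ)
    (T : (Fin m → ((Fin n → ℝ) → ℝ)) → ((Fin n → ℝ) → ℝ)) : Prop :=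
  (∀ (f : Fin m → ((Fin n → ℝ) → ℝ)) (i : Fin m) (g h : (Fin n → ℝ) → ℝ)
      (x : Fin n → ℝ),
      |T (Function.update f i (g + h)) x|
        ≤ |T (Function.update f i g) x| + |T (Function.update f i h) x|) ∧
  (∀ (f : Fin m → ((Fin n → ℝ) → ℝ)) (i : Fin m) (c : ℝ) (g : (Fin n → ℝ) → ℝ)
      (x : Fin n → ℝ),
      |T (Function.update f i (c • g)) x| = |c| * |T (Function.update f i g) x|)

/-- The multi-sublinear size condition (1.1) with constant `C`. -/
def SizeCond (n m : ℕ)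
    (T : (Fin m → ((Fin n → ℝ) → ℝ)) → ((Fin n → ℝ) → ℝ)) (C : ℝ) : Prop :=
  ∀ f : Fin m → ((Fin n → ℝ) → ℝ),
    (∀ i, Integrable (f i)) → (∀ i, HasCompactSupport (f i)) →
    ∀ x, x ∉ ⋂ j, Function.support (f j) →
      |T f x| ≤ C * ∫ y : Fin m → (Fin n → ℝ),
        (∏ i, |f i (y i)|) / Real.sqrt (∑ i, eudist n x (y i) ^ 2) ^ (m * n)

/-- The multi-sublinear commutator size condition (1.2), with symbol `b` and
distinguished index `i`, with constant `C`. -/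
def CommSizeCond (n m : ℕ) (b : (Fin n → ℝ) → ℝ) (i : Fin m)
    (T : (Fin m → ((Fin n → ℝ) → ℝ)) → ((Fin n → ℝ) → ℝ)) (C : ℝ) : Prop :=
  ∀ f : Fin m → ((Fin n → ℝ) → ℝ),
    (∀ k, Integrable (f k)) → (∀ k, HasCompactSupport (f k)) →
    ∀ x, x ∉ ⋂ j, Function.support (f j) →
      |T f x| ≤ C * ∫ y : Fin m → (Fin n → ℝ),
        |b x - b (y i)| * (∏ k, |f k (y k)|)
          / Real.sqrt (∑ k, eudist n x (y k) ^ 2) ^ (m * n)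

/-- The Hardy–Littlewood maximal operator. -/
def hlMax (n : ℕ) (f : (Fin n → ℝ) → ℝ) (x : Fin n → ℝ) : ℝ≥0∞ :=
  ⨆ (r : ℝ) (_ : 0 < r),
    (volume (eball n x r))⁻¹ * ∫⁻ y in eball n x r, ENNReal.ofReal |f y|

/-- The maximal commutator of the Hardy–Littlewood maximal operator. -/
def maxComm (n : ℕ) (b f : (Fin n → ℝ) → ℝ) (x : Fin n → ℝ) : ℝ≥0∞ :=
  ⨆ (r : ℝ) (_ : 0 < r),
    (volume (eball n x r))⁻¹
      * ∫⁻ y in eball n x r, ENNReal.ofReal (|b x - b y| * |f y|)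

/-- The multi-sublinear maximal operator `M_m`. -/
def multiMax (n m : ℕ) (f : Fin m → ((Fin n → ℝ) → ℝ)) (x : Fin n → ℝ) : ℝ≥0∞ :=
  ⨆ (r : ℝ) (_ : 0 < r),
    ∏ i, (volume (eball n x r))⁻¹ * ∫⁻ y in eball n x r, ENNReal.ofReal |f i y|

/-- The multi-sublinear maximal commutator `M^{b⃗}_{m,i}`. -/
def multiMaxComm (n m : ℕ) (b : Fin m → ((Fin n → ℝ) → ℝ)) (i : Fin m)
    (f : Fin m → ((Fin n → ℝ) → ℝ)) (x : Fin n → ℝ) : ℝ≥0∞ :=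
  (⨆ (r : ℝ) (_ : 0 < r),
      (volume (eball n x r))⁻¹
        * ∫⁻ y in eball n x r, ENNReal.ofReal (|b i x - b i y| * |f i y|)) *
  (⨆ (r : ℝ) (_ : 0 < r),
      ∏ k ∈ Finset.univ.erase i,
        (volume (eball n x r))⁻¹ * ∫⁻ y in eball n x r, ENNReal.ofReal |f k y|)

/-- `w` is an `A₁` weight with constant `c`. -/
def IsA1Weight (n : ℕ) (w : (Fin n → ℝ) → ℝ) (c : ℝ) : Prop :=
  (∀ x, 0 < w x) ∧ LocallyIntegrable w ∧
    ∀ (x : Fin n → ℝ) (r : ℝ), 0 < r →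
      ∀ᵐ y ∂(volume.restrict (eball n x r)),
        (volume (eball n x r)).toReal⁻¹ * ∫ z in eball n x r, w z ≤ c * w y

/-- `T` is an `m`-linear Calderón–Zygmund operator. -/
def IsCZOperator (n m : ℕ)
    (T : (Fin m → ((Fin n → ℝ) → ℝ)) → ((Fin n → ℝ) → ℝ)) : Prop :=
  -- additivity in each entry
  (∀ (f : Fin m → ((Fin n → ℝ) → ℝ)) (i : Fin m) (g h : (Fin n → ℝ) → ℝ),
      T (Function.update f i (g + h))
        = T (Function.update f i g) + T (Function.update f i h)) ∧
  -- homogeneity in each entry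
  (∀ (f : Fin m → ((Fin n → ℝ) → ℝ)) (i : Fin m) (c : ℝ) (g : (Fin n → ℝ) → ℝ),
      T (Function.update f i (c • g)) = c • T (Function.update f i g)) ∧
  -- boundedness from a product of Lebesgue spaces
  (∃ (s : Fin m → ℝ) (s₀ A : ℝ), (∀ i, 1 ≤ s i) ∧ 0 < s₀ ∧
      (1 / s₀ = ∑ i, 1 / s i) ∧ 0 < A ∧
      ∀ f : Fin m → ((Fin n → ℝ) → ℝ), (∀ i, Measurable (f i)) →
        (∀ i, mixedNorm n (fun _ => s i) (f i) ≠ ⊤) →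
        mixedNorm n (fun _ => s₀) (T f)
          ≤ ENNReal.ofReal A * ∏ i, mixedNorm n (fun _ => s i) (f i)) ∧
  -- Calderón–Zygmund kernel and representation
  (∃ (K : (Fin n → ℝ) → (Fin m → (Fin n → ℝ)) → ℝ) (ε C : ℝ), 0 < ε ∧ 0 < C ∧
      -- size estimate
      (∀ x y, ¬(∀ k, y k = x) →
        |K x y| ≤ C / (∑ k, eudist n x (y k)) ^ (m * n)) ∧
      -- regularity in the first variable
      (∀ x x' y, ¬(∀ k, y k = x) →
        2 * eudist n x x' ≤ (⨆ k, eudist n x (y k)) →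
        |K x y - K x' y|
          ≤ C * eudist n x x' ^ ε / (∑ k, eudist n x (y k)) ^ ((m * n : ℝ) + ε)) ∧
      -- regularity in each of the remaining variables
      (∀ x y (k : Fin m) (y' : Fin n → ℝ), ¬(∀ j, y j = x) →
        2 * eudist n (y k) y' ≤ (⨆ j, eudist n x (y j)) →
        |K x y - K x (Function.update y k y')|
          ≤ C * eudist n (y k) y' ^ ε / (∑ j, eudist n x (y j)) ^ ((m * n : ℝ) + ε)) ∧
      -- integral representation off the supports
      (∀ f : Fin m → ((Fin n → ℝ) → ℝ),
        (∀ j, Measurable (f j)) → (∀ j, ∃ M : ℝ, ∀ x, |f j x| ≤ M) →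
        (∀ j, HasCompactSupport (f j)) →
        ∀ x, x ∉ ⋂ j, Function.support (f j) →
          T f x = ∫ y : Fin m → (Fin n → ℝ), K x y * ∏ j, f j (y j)))

/-- The commutator `K^{b⃗}_{m,i}` of an `m`-linear operator. -/
def czComm (n m : ℕ) (T : (Fin m → ((Fin n → ℝ) → ℝ)) → ((Fin n → ℝ) → ℝ))
    (b : Fin m → ((Fin n → ℝ) → ℝ)) (i : Fin m)
    (f : Fin m → ((Fin n → ℝ) → ℝ)) : (Fin n → ℝ) → ℝ :=
  fun x => b i x * T f x - T (Function.update f i fun y => b i y * f i y) x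

/-! ### Auxiliary lemmas for `stmt2` -/

section Stmt2Aux

lemma aux_msnoc {n : ℕ} :
    Measurable (fun p : ((Fin n → ℝ) × ℝ) => (Fin.snoc p.1 p.2 : Fin (n+1) → ℝ)) := by
  apply measurable_pi_lambda
  intro i
  induction i using Fin.lastCases with
  | last => simpa [Fin.snoc_last] using measurable_snd
  | cast j => simp only [Fin.snoc_castSucc]; exact (measurable_pi_apply j).comp measurable_fst

lemma aux_param_meas : ∀ (n : ℕ) (q : Fin n → ℝ) {α : Type} [MeasurableSpace α]
    (g : α × (Fin n → ℝ) → ℝ≥0∞), Measurable g →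
    Measurable (fun a => mixedLnorm n q (fun y => g (a, y))) := by
  intro n
  induction n with
  | zero =>
    intro q α _ g hg
    exact hg.comp (measurable_id.prodMk measurable_const)
  | succ n ih =>
    intro q α _ g hg
    have h1 : Measurable (fun p : α × ℝ =>
        mixedLnorm n (fun i => q i.castSucc) (fun y => g (p.1, Fin.snoc y p.2))) := by
      exact ih _ (fun z : (α × ℝ) × (Fin n → ℝ) => g (z.1.1, Fin.snoc z.2 z.1.2))
        (hg.comp ((measurable_fst.comp measurable_fst).prodMk
          (aux_msnoc.comp (measurable_snd.prodMk (measurable_snd.comp measurable_fst)))))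
    have h2 : Measurable (fun a : α => ∫⁻ t : ℝ,
        (mixedLnorm n (fun i => q i.castSucc) (fun y => g (a, Fin.snoc y t)))
          ^ q (Fin.last n)) :=
      Measurable.lintegral_prod_right'
        ((ENNReal.continuous_rpow_const.measurable).comp h1)
    exact (ENNReal.continuous_rpow_const.measurable).comp h2

lemma aux_mono : ∀ (n : ℕ) (q : Fin n → ℝ), (∀ j, 0 ≤ q j) →
    ∀ (g g' : (Fin n → ℝ) → ℝ≥0∞), (∀ y, g y ≤ g' y) →
    mixedLnorm n q g ≤ mixedLnorm n q g' := by
  intro n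
  induction n with
  | zero => intro q _ g g' h; exact h _
  | succ n ih =>
    intro q hq g g' h
    simp only [mixedLnorm]
    refine ENNReal.rpow_le_rpow ?_ (one_div_nonneg.mpr (hq _))
    refine lintegral_mono fun t => ENNReal.rpow_le_rpow ?_ (hq _)
    exact ih _ (fun j => hq _) _ _ (fun y => h _)

lemma aux_holder1d {p : ℝ} (hp : 1 ≤ p) (F : ℝ → ℝ≥0∞) (hF : Measurable F)
    (a b : ℝ) (hab : a ≤ b) :
    ∫⁻ t, (Set.Ioo a b).indicator (fun _ => (1:ℝ≥0∞)) t * F t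
      ≤ (∫⁻ t, F t ^ p) ^ (1/p) * ENNReal.ofReal ((b - a) ^ (1 - 1/p)) := by
  rcases eq_or_lt_of_le hp with hp1 | hp1
  · have h1 : (1:ℝ) - 1/p = 0 := by rw [← hp1]; norm_num
    rw [h1, Real.rpow_zero, ENNReal.ofReal_one, mul_one]
    have h2 : (1:ℝ)/p = 1 := by rw [← hp1]; norm_num
    rw [h2, ENNReal.rpow_one]
    calc ∫⁻ t, (Set.Ioo a b).indicator (fun _ => (1:ℝ≥0∞)) t * F t
        ≤ ∫⁻ t, F t := by
          refine lintegral_mono fun t => ?_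
          by_cases h : t ∈ Set.Ioo a b <;> simp [h]
      _ = ∫⁻ t, F t ^ p := by
          refine lintegral_congr fun t => ?_
          rw [← hp1, ENNReal.rpow_one]
  · have hpq : p.HolderConjugate (p / (p - 1)) := Real.holderConjugate_iff.mpr ⟨hp1, by
      have : p - 1 ≠ 0 := by linarith
      have hp0 : p ≠ 0 := by linarith
      field_simp <;> ring⟩
    have hp'pos : 0 < p / (p - 1) := div_pos (by linarith) (by linarith)
    set p' := p / (p - 1) with hp'
    have hχ : Measurable ((Set.Ioo a b).indicator (fun _ => (1:ℝ≥0∞))) :=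
      measurable_const.indicator measurableSet_Ioo
    have key := ENNReal.lintegral_mul_le_Lp_mul_Lq (volume : Measure ℝ) hpq
      hF.aemeasurable hχ.aemeasurable
    have hχp : ∀ t, ((Set.Ioo a b).indicator (fun _ => (1:ℝ≥0∞)) t) ^ p'
        = (Set.Ioo a b).indicator (fun _ => (1:ℝ≥0∞)) t := by
      intro t
      by_cases h : t ∈ Set.Ioo a b
      · simp [h]
      · simp [h, ENNReal.zero_rpow_of_pos hp'pos]
    have hint : ∫⁻ t, ((Set.Ioo a b).indicator (fun _ => (1:ℝ≥0∞)) t) ^ p'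
        = ENNReal.ofReal (b - a) := by
      simp only [hχp]
      rw [lintegral_indicator measurableSet_Ioo, setLIntegral_one, Real.volume_Ioo]
    have h1p' : 1/p' = 1 - 1/p := by
      have := hpq.inv_add_inv_eq_one
      rw [one_div, one_div]
      linarith
    calc ∫⁻ t, (Set.Ioo a b).indicator (fun _ => (1:ℝ≥0∞)) t * F t
        = ∫⁻ t, (F * (Set.Ioo a b).indicator (fun _ => (1:ℝ≥0∞))) t := by
          refine lintegral_congr fun t => ?_
          simp [mul_comm]
      _ ≤ (∫⁻ t, F t ^ p) ^ (1/p)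
            * (∫⁻ t, ((Set.Ioo a b).indicator (fun _ => (1:ℝ≥0∞)) t) ^ p') ^ (1/p') := key
      _ = (∫⁻ t, F t ^ p) ^ (1/p) * ENNReal.ofReal ((b - a) ^ (1 - 1/p)) := by
          rw [hint, ← h1p', ← ENNReal.ofReal_rpow_of_nonneg (by linarith) (one_div_nonneg.mpr hp'pos.le)]

lemma aux_box : ∀ (n : ℕ) (q : Fin n → ℝ), (∀ j, 1 ≤ q j) →
    ∀ (g : (Fin n → ℝ) → ℝ≥0∞), Measurable g → ∀ (a b : Fin n → ℝ), (∀ i, a i ≤ b i) →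
    (∫⁻ y, g y * ∏ i, (Set.Ioo (a i) (b i)).indicator (fun _ => (1:ℝ≥0∞)) (y i))
      ≤ mixedLnorm n q g * ∏ i, ENNReal.ofReal ((b i - a i) ^ (1 - 1/q i)) := by
  intro n
  induction n with
  | zero =>
    intro q hq g hg a b hab
    simp only [Finset.univ_eq_empty, Finset.prod_empty, mul_one, mixedLnorm]
    have hv : (volume : Measure (Fin 0 → ℝ)) = Measure.dirac (fun i : Fin 0 => i.elim0) := by
      rw [volume_pi, Measure.pi_of_empty]
      congr
    rw [hv, lintegral_dirac' _ hg]
  | succ n ih =>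
    intro q hq g hg a b hab
    set qc : Fin n → ℝ := fun i => q i.castSucc with hqc
    set χ : Fin (n+1) → ℝ → ℝ≥0∞ :=
      fun i => (Set.Ioo (a i) (b i)).indicator (fun _ => (1:ℝ≥0∞)) with hχ
    have hχm : ∀ i, Measurable (χ i) := fun i => measurable_const.indicator measurableSet_Ioo
    have hχle : ∀ i t, χ i t ≤ 1 := by
      intro i t; by_cases h : t ∈ Set.Ioo (a i) (b i) <;> simp [χ, h]
    have hχne : ∀ i t, χ i t ≠ ⊤ := fun i t => ne_top_of_le_ne_top ENNReal.one_ne_top (hχle i t)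
    set G : (Fin (n+1) → ℝ) → ℝ≥0∞ := fun y => g y * ∏ i, χ i (y i) with hG
    have hGm : Measurable G := by
      apply hg.mul
      exact Finset.measurable_prod _ fun i _ => (hχm i).comp (measurable_pi_apply i)
    set F : ℝ → ℝ≥0∞ := fun t => mixedLnorm n qc (fun y => g (Fin.snoc y t)) with hF
    have hFm : Measurable F := by
      exact aux_param_meas n qc (fun z : ℝ × (Fin n → ℝ) => g (Fin.snoc z.2 z.1))
        (hg.comp (aux_msnoc.comp (measurable_snd.prodMk measurable_fst)))
    -- rewrite the integral as an iterated integral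
    have hmp := (measurePreserving_piFinSuccAbove
      (fun _ : Fin (n+1) => (volume : Measure ℝ)) (Fin.last n)).symm
    set e := MeasurableEquiv.piFinSuccAbove (fun _ : Fin (n+1) => ℝ) (Fin.last n) with he
    have hsymm : ∀ p : ℝ × (Fin n → ℝ), e.symm p = Fin.snoc p.2 p.1 := by
      intro p
      simp [e, MeasurableEquiv.piFinSuccAbove_symm_apply, Fin.insertNthEquiv,
        Fin.insertNth_last']
    have step1 : (∫⁻ y, G y) = ∫⁻ p : ℝ × (Fin n → ℝ), G (Fin.snoc p.2 p.1)
        ∂((volume : Measure ℝ).prod (volume : Measure (Fin n → ℝ))) := by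
      rw [volume_pi]
      have := hmp.lintegral_map_equiv G e.symm
      rw [show ((fun _ : Fin (n+1) => (volume : Measure ℝ)) (Fin.last n)).prod
          (Measure.pi fun j => (fun _ : Fin (n+1) => (volume : Measure ℝ))
            ((Fin.last n).succAbove j)) = ((volume : Measure ℝ).prod
              (volume : Measure (Fin n → ℝ))) from by rw [← volume_pi]] at this
      rw [this]
      refine lintegral_congr fun p => ?_
      rw [hsymm]
    have step2 : (∫⁻ p : ℝ × (Fin n → ℝ), G (Fin.snoc p.2 p.1)
          ∂((volume : Measure ℝ).prod (volume : Measure (Fin n → ℝ))))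
        = ∫⁻ t : ℝ, ∫⁻ y' : Fin n → ℝ, G (Fin.snoc y' t) := by
      exact lintegral_prod _ ((hGm.comp (aux_msnoc.comp
        (measurable_snd.prodMk measurable_fst))).aemeasurable)
    have hGsnoc : ∀ (t : ℝ) (y' : Fin n → ℝ),
        G (Fin.snoc y' t) = χ (Fin.last n) t *
          (g (Fin.snoc y' t) * ∏ i : Fin n, χ i.castSucc (y' i)) := by
      intro t y'
      rw [hG]
      simp only [Fin.prod_univ_castSucc, Fin.snoc_castSucc, Fin.snoc_last]
      ring
    set P : ℝ≥0∞ := ∏ i : Fin n,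
      ENNReal.ofReal ((b i.castSucc - a i.castSucc) ^ (1 - 1/qc i)) with hP
    have hPne : P ≠ ⊤ := by
      rw [hP]
      exact (ENNReal.prod_lt_top (fun i _ => ENNReal.ofReal_lt_top)).ne
    have inner_le : ∀ t : ℝ, (∫⁻ y' : Fin n → ℝ, G (Fin.snoc y' t))
        ≤ χ (Fin.last n) t * (F t * P) := by
      intro t
      calc (∫⁻ y' : Fin n → ℝ, G (Fin.snoc y' t))
          = χ (Fin.last n) t * ∫⁻ y' : Fin n → ℝ,
              g (Fin.snoc y' t) * ∏ i : Fin n, χ i.castSucc (y' i) := by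
            simp only [hGsnoc]
            rw [lintegral_const_mul' _ _ (hχne _ t)]
        _ ≤ χ (Fin.last n) t * (F t * P) := by
            refine mul_le_mul_right ?_ _
            exact ih qc (fun j => hq _) (fun y => g (Fin.snoc y t))
              (hg.comp (aux_msnoc.comp (measurable_id.prodMk measurable_const)))
              (fun i => a i.castSucc) (fun i => b i.castSucc) (fun i => hab _)
    calc (∫⁻ y, G y) = ∫⁻ t : ℝ, ∫⁻ y' : Fin n → ℝ, G (Fin.snoc y' t) := by
          rw [step1, step2]
      _ ≤ ∫⁻ t : ℝ, χ (Fin.last n) t * (F t * P) := lintegral_mono inner_le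
      _ = (∫⁻ t : ℝ, χ (Fin.last n) t * F t) * P := by
          rw [← lintegral_mul_const' P _ hPne]
          refine lintegral_congr fun t => ?_
          ring
      _ ≤ ((∫⁻ t, F t ^ q (Fin.last n)) ^ (1/q (Fin.last n))
            * ENNReal.ofReal ((b (Fin.last n) - a (Fin.last n)) ^ (1 - 1/q (Fin.last n)))) * P := by
          exact mul_le_mul_left (aux_holder1d (hq _) F hFm _ _ (hab _)) P
      _ = mixedLnorm (n+1) q g * ∏ i, ENNReal.ofReal ((b i - a i) ^ (1 - 1/q i)) := by
          simp only [mixedLnorm]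
          rw [Fin.prod_univ_castSucc]
          ring

lemma aux_rpow_sum {x : ℝ} (hx : 0 < x) {ι : Type} (s : Finset ι) (f : ι → ℝ) :
    x ^ (∑ i ∈ s, f i) = ∏ i ∈ s, x ^ f i := by
  classical
  induction s using Finset.induction with
  | empty => simp
  | insert _ _ h ih => rw [Finset.sum_insert h, Finset.prod_insert h, Real.rpow_add hx, ih]

lemma aux_eudist_cont {n : ℕ} (x₀ : Fin n → ℝ) : Continuous (eudist n x₀) := by
  unfold eudist
  exact Real.continuous_sqrt.comp
    (continuous_finset_sum _ fun i _ => ((continuous_const.sub (continuous_apply i)).pow 2))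

lemma aux_eudist_nonneg {n : ℕ} (x₀ y : Fin n → ℝ) : 0 ≤ eudist n x₀ y :=
  Real.sqrt_nonneg _

lemma aux_coord_le {n : ℕ} (x₀ y : Fin n → ℝ) (i : Fin n) :
    |x₀ i - y i| ≤ eudist n x₀ y := by
  rw [eudist, ← Real.sqrt_sq_eq_abs]
  exact Real.sqrt_le_sqrt (Finset.single_le_sum
    (f := fun j => (x₀ j - y j) ^ 2) (fun j _ => sq_nonneg _) (Finset.mem_univ i))

lemma aux_ind_abs {n : ℕ} (s : Set (Fin n → ℝ)) (f : (Fin n → ℝ) → ℝ) :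
    (fun x => ENNReal.ofReal |s.indicator f x|)
      = s.indicator (fun x => ENNReal.ofReal |f x|) := by
  funext x
  by_cases h : x ∈ s <;> simp [h]

lemma aux_scalar (n : ℕ) {R σ : ℝ} (hR : 0 < R) :
    (R ^ n)⁻¹ * (2 * (2 * R)) ^ ((n : ℝ) - σ)
      ≤ 2 ^ (2 * n + 1) * ((4 * R) ^ (-1 - σ) * (2 * R)) := by
  have h4 : (0:ℝ) < 4 * R := by linarith
  have e1 : (2 : ℝ) * (2 * R) = 4 * R := by ring
  rw [e1]
  have e2 : (4 * R) ^ ((n:ℝ) - σ) = (4*R)^(n:ℕ) * (4*R)^(-σ) := by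
    rw [show (n:ℝ) - σ = (n:ℝ) + (-σ) by ring, Real.rpow_add h4, Real.rpow_natCast]
  have e3 : (4 * R) ^ (-1 - σ : ℝ) = (4*R)⁻¹ * (4*R)^(-σ) := by
    rw [show (-1:ℝ) - σ = (-1:ℝ) + (-σ) by ring, Real.rpow_add h4, Real.rpow_neg_one]
  rw [e2, e3]
  set X : ℝ := (4*R)^(-σ) with hX
  have hX0 : 0 ≤ X := Real.rpow_nonneg h4.le _
  have hRn : (0:ℝ) < R ^ n := pow_pos hR n
  have h6 : (R^n)⁻¹ * (4*R)^n = 4^n := by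
    rw [mul_pow]
    field_simp
  have h7 : (2:ℝ)^(2*n+1) * (1/2) = 4^n := by
    have h8 : (2:ℝ)^(2*n+1) = 4^n * 2 := by
      rw [pow_succ, pow_mul]
      norm_num
    rw [h8]
    ring
  have h5 : (2*R) * (4*R)⁻¹ = 1/2 := by
    field_simp
    ring
  calc (R^n)⁻¹ * ((4*R)^n * X) = ((R^n)⁻¹ * (4*R)^n) * X := by ring
    _ = 4^n * X := by rw [h6]
    _ = (2^(2*n+1) * (1/2)) * X := by rw [h7]
    _ ≤ 2^(2*n+1) * ((4*R)⁻¹ * X * (2*R)) := le_of_eq (by rw [← h5]; ring)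

end Stmt2Aux


theorem stmt2 (n : ℕ) (hn : 0 < n) (q : Fin n → ℝ) (hq : ∀ j, 1 ≤ q j) :
    ∃ C : ℝ, 0 < C ∧ ∀ (x₀ : Fin n → ℝ) (r : ℝ), 0 < r →
      ∀ f : (Fin n → ℝ) → ℝ, Measurable f →
      (∀ (x : Fin n → ℝ) (t : ℝ), mixedNorm n q ((eball n x t).indicator f) ≠ ⊤) →
      (∫⁻ y in {y | 2 * r ≤ eudist n x₀ y},
          ENNReal.ofReal (|f y| / eudist n x₀ y ^ n))
        ≤ ENNReal.ofReal C
            * ∫⁻ t in Set.Ioi (2 * r),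
                ENNReal.ofReal (t ^ (-1 - ∑ j, 1 / q j))
                  * mixedNorm n q ((eball n x₀ t).indicator f) := by
  classical
  refine ⟨2 ^ (2 * n + 1), by positivity, ?_⟩
  intro x₀ r hr f hf hfin
  set d : (Fin n → ℝ) → ℝ := eudist n x₀ with hd
  have hdm : Measurable d := (aux_eudist_cont x₀).measurable
  set σ : ℝ := ∑ j, 1 / q j with hσ
  have hq0 : ∀ j, (0:ℝ) < q j := fun j => lt_of_lt_of_le one_pos (hq j)
  have hσ0 : 0 ≤ σ := Finset.sum_nonneg fun j _ => one_div_nonneg.mpr (hq0 j).le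
  set R : ℕ → ℝ := fun k => 2 ^ k * (2 * r) with hR
  have hR0 : ∀ k, 0 < R k := fun k => mul_pos (pow_pos two_pos k) (by linarith)
  have hRsucc : ∀ k, R (k+1) = 2 * R k := fun k => by
    simp only [hR, pow_succ]; ring
  have hRmono : ∀ {k l : ℕ}, k ≤ l → R k ≤ R l := by
    intro k l h
    exact mul_le_mul_of_nonneg_right (pow_le_pow_right₀ one_le_two h) (by linarith)
  set A : ℕ → Set (Fin n → ℝ) := fun k => d ⁻¹' (Set.Ico (R k) (R (k+1))) with hA
  have hAm : ∀ k, MeasurableSet (A k) := fun k => hdm measurableSet_Ico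
  have hIco : ∀ {k l : ℕ}, k ≠ l →
      Disjoint (Set.Ico (R k) (R (k+1))) (Set.Ico (R l) (R (l+1))) := by
    intro k l hkl
    rcases hkl.lt_or_gt with h | h
    · exact Set.Ico_disjoint_Ico.mpr (le_trans (min_le_left _ _)
        (le_trans (hRmono (Nat.succ_le_of_lt h)) (le_max_right _ _)))
    · exact Set.Ico_disjoint_Ico.mpr (le_trans (min_le_right _ _)
        (le_trans (hRmono (Nat.succ_le_of_lt h)) (le_max_left _ _)))
  have hAd : Pairwise (Function.onFun Disjoint A) := fun k l hkl => (hIco hkl).preimage d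
  have hcover : {y | 2 * r ≤ d y} = ⋃ k, A k := by
    ext y
    constructor
    · intro hy
      have hy' : 2 * r ≤ d y := hy
      have h2r : (0:ℝ) < 2 * r := by linarith
      have hex : ∃ m : ℕ, d y < 2 ^ (m+1) * (2*r) := by
        obtain ⟨m, hm⟩ := pow_unbounded_of_one_lt (d y / (2*r)) one_lt_two
        refine ⟨m, ?_⟩
        calc d y < 2 ^ m * (2*r) := (div_lt_iff₀ h2r).mp hm
          _ ≤ 2 ^ (m+1) * (2*r) :=
            mul_le_mul_of_nonneg_right (pow_le_pow_right₀ one_le_two (Nat.le_succ m)) h2r.le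
      refine Set.mem_iUnion.mpr ⟨Nat.find hex, ?_, ?_⟩
      · rcases Nat.eq_zero_or_pos (Nat.find hex) with h0 | hpos
        · rw [h0]
          simpa [hR] using hy'
        · obtain ⟨j, hj⟩ := Nat.exists_eq_succ_of_ne_zero hpos.ne'
          rw [hj]
          have hmin := Nat.find_min hex (m := j) (by omega)
          exact not_lt.mp hmin
      · exact Nat.find_spec hex
    · intro hy
      obtain ⟨k, hk⟩ := Set.mem_iUnion.mp hy
      have h0 : R 0 = 2 * r := by simp [hR]
      show 2 * r ≤ d y
      calc 2 * r = R 0 := h0.symm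
        _ ≤ R k := hRmono (Nat.zero_le k)
        _ ≤ d y := hk.1
  have hNball : ∀ t : ℝ, mixedNorm n q ((eball n x₀ t).indicator f)
      = mixedLnorm n q ((eball n x₀ t).indicator (fun y => ENNReal.ofReal |f y|)) := by
    intro t
    unfold mixedNorm
    rw [aux_ind_abs]
  have hNmono : ∀ {s t : ℝ}, s ≤ t →
      mixedNorm n q ((eball n x₀ s).indicator f)
        ≤ mixedNorm n q ((eball n x₀ t).indicator f) := by
    intro s t hst
    rw [hNball, hNball]
    refine aux_mono n q (fun j => (hq0 j).le) _ _ fun y => ?_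
    refine Set.indicator_le_indicator_of_subset ?_ (fun y => zero_le) y
    intro z hz
    exact lt_of_lt_of_le hz hst
  have hballm : ∀ t : ℝ, MeasurableSet (eball n x₀ t) := by
    intro t
    have : eball n x₀ t = d ⁻¹' (Set.Iio t) := rfl
    rw [this]
    exact hdm measurableSet_Iio
  -- the key per-annulus estimate
  have key : ∀ k : ℕ, (∫⁻ y in A k, ENNReal.ofReal (|f y| / d y ^ n))
      ≤ ENNReal.ofReal ((2:ℝ) ^ (2 * n + 1))
        * ∫⁻ t in Set.Ico (R (k+1)) (R (k+2)),
            ENNReal.ofReal (t ^ (-1 - σ)) * mixedNorm n q ((eball n x₀ t).indicator f) := by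
    intro k
    set H : (Fin n → ℝ) → ℝ≥0∞ :=
      (eball n x₀ (R (k+1))).indicator (fun y => ENNReal.ofReal |f y|) with hH
    have hHm : Measurable H :=
      (ENNReal.measurable_ofReal.comp hf.abs).indicator (hballm _)
    set χ : Fin n → ℝ → ℝ≥0∞ := fun i =>
      (Set.Ioo (x₀ i - R (k+1)) (x₀ i + R (k+1))).indicator (fun _ => (1:ℝ≥0∞)) with hχ
    set NR1 : ℝ≥0∞ := mixedNorm n q ((eball n x₀ (R (k+1))).indicator f) with hNR1
    have stepA : (∫⁻ y in A k, ENNReal.ofReal (|f y| / d y ^ n))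
        ≤ ∫⁻ y in A k, ENNReal.ofReal ((R k ^ n)⁻¹) * ENNReal.ofReal |f y| := by
      refine lintegral_mono_ae ?_
      rw [ae_restrict_iff' (hAm k)]
      filter_upwards with y hy
      have h1 : R k ≤ d y := hy.1
      have hdy : 0 < d y := lt_of_lt_of_le (hR0 k) h1
      rw [← ENNReal.ofReal_mul (inv_nonneg.mpr (pow_nonneg (hR0 k).le n))]
      apply ENNReal.ofReal_le_ofReal
      have hinv : (d y ^ n)⁻¹ ≤ (R k ^ n)⁻¹ :=
        inv_anti₀ (pow_pos (hR0 k) n) (pow_le_pow_left₀ (hR0 k).le h1 n)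
      calc |f y| / d y ^ n = (d y ^ n)⁻¹ * |f y| := by rw [div_eq_mul_inv]; ring
        _ ≤ (R k ^ n)⁻¹ * |f y| := mul_le_mul_of_nonneg_right hinv (abs_nonneg _)
    have stepB : (∫⁻ y in A k, ENNReal.ofReal ((R k ^ n)⁻¹) * ENNReal.ofReal |f y|)
        = ENNReal.ofReal ((R k ^ n)⁻¹) * ∫⁻ y in A k, ENNReal.ofReal |f y| :=
      lintegral_const_mul' _ _ ENNReal.ofReal_ne_top
    have stepC : (∫⁻ y in A k, ENNReal.ofReal |f y|)
        ≤ ∫⁻ y, H y * ∏ i, χ i (y i) := by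
      have heq : ∀ y ∈ A k, ENNReal.ofReal |f y| = H y * ∏ i, χ i (y i) := by
        intro y hy
        have hyb : d y < R (k+1) := hy.2
        have hHy : H y = ENNReal.ofReal |f y| :=
          Set.indicator_of_mem (show y ∈ eball n x₀ (R (k+1)) from hyb) _
        have hχy : ∀ i, χ i (y i) = 1 := by
          intro i
          apply Set.indicator_of_mem
          have hlt : |x₀ i - y i| < R (k+1) := lt_of_le_of_lt (aux_coord_le x₀ y i) hyb
          have h2 := abs_lt.mp hlt
          exact ⟨by linarith [h2.2], by linarith [h2.1]⟩
        rw [hHy]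
        simp [hχy]
      calc (∫⁻ y in A k, ENNReal.ofReal |f y|)
          = ∫⁻ y in A k, H y * ∏ i, χ i (y i) :=
            setLIntegral_congr_fun (hAm k) heq
        _ ≤ ∫⁻ y, H y * ∏ i, χ i (y i) := setLIntegral_le_lintegral _ _
    have stepD : (∫⁻ y, H y * ∏ i, χ i (y i))
        ≤ NR1 * ENNReal.ofReal ((2 * R (k+1)) ^ ((n:ℝ) - σ)) := by
      have hbox := aux_box n q hq H hHm (fun i => x₀ i - R (k+1)) (fun i => x₀ i + R (k+1))
        (fun i => by show x₀ i - R (k+1) ≤ x₀ i + R (k+1); linarith [hR0 (k+1)])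
      have hba : ∀ i : Fin n, x₀ i + R (k+1) - (x₀ i - R (k+1)) = 2 * R (k+1) := fun i => by ring
      simp only [hba] at hbox
      have h2R : (0:ℝ) < 2 * R (k+1) := by linarith [hR0 (k+1)]
      have hprod : (∏ i, ENNReal.ofReal ((2 * R (k+1)) ^ (1 - 1/q i)))
          = ENNReal.ofReal ((2 * R (k+1)) ^ ((n:ℝ) - σ)) := by
        rw [← ENNReal.ofReal_prod_of_nonneg (fun i _ => Real.rpow_nonneg h2R.le _),
          ← aux_rpow_sum h2R]
        congr 1
        congr 1
        rw [Finset.sum_sub_distrib, hσ]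
        simp
      rw [hprod] at hbox
      have hml : mixedLnorm n q H = NR1 := by
        rw [hNR1, hNball]
      rw [hml] at hbox
      exact hbox
    have stepE : ENNReal.ofReal ((R k ^ n)⁻¹)
          * (NR1 * ENNReal.ofReal ((2 * R (k+1)) ^ ((n:ℝ) - σ)))
        ≤ ENNReal.ofReal ((2:ℝ) ^ (2 * n + 1))
          * (ENNReal.ofReal (R (k+2) ^ (-1 - σ)) * NR1 * ENNReal.ofReal (R (k+1))) := by
      have hR2 : R (k+2) = 4 * R k := by rw [hRsucc, hRsucc]; ring
      have hR1 : R (k+1) = 2 * R k := hRsucc k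
      calc ENNReal.ofReal ((R k ^ n)⁻¹) * (NR1 * ENNReal.ofReal ((2 * R (k+1)) ^ ((n:ℝ) - σ)))
          = ENNReal.ofReal ((R k ^ n)⁻¹ * (2 * R (k+1)) ^ ((n:ℝ) - σ)) * NR1 := by
            rw [ENNReal.ofReal_mul (inv_nonneg.mpr (pow_nonneg (hR0 k).le n))]
            ring
        _ ≤ ENNReal.ofReal ((2:ℝ) ^ (2 * n + 1) * (R (k+2) ^ (-1 - σ) * R (k+1))) * NR1 := by
            refine mul_le_mul_left (ENNReal.ofReal_le_ofReal ?_) _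
            rw [hR2, hR1]
            exact aux_scalar n (hR0 k)
        _ = ENNReal.ofReal ((2:ℝ) ^ (2 * n + 1))
            * (ENNReal.ofReal (R (k+2) ^ (-1 - σ)) * NR1 * ENNReal.ofReal (R (k+1))) := by
            rw [ENNReal.ofReal_mul (by positivity),
              ENNReal.ofReal_mul (Real.rpow_nonneg (hR0 (k+2)).le _)]
            ring
    have stepF : ENNReal.ofReal (R (k+2) ^ (-1 - σ)) * NR1 * ENNReal.ofReal (R (k+1))
        ≤ ∫⁻ t in Set.Ico (R (k+1)) (R (k+2)),
            ENNReal.ofReal (t ^ (-1 - σ)) * mixedNorm n q ((eball n x₀ t).indicator f) := by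
      have hpt : ∀ t ∈ Set.Ico (R (k+1)) (R (k+2)),
          ENNReal.ofReal (R (k+2) ^ (-1 - σ)) * NR1
            ≤ ENNReal.ofReal (t ^ (-1 - σ)) * mixedNorm n q ((eball n x₀ t).indicator f) := by
        intro t ht
        refine mul_le_mul' (ENNReal.ofReal_le_ofReal ?_) (hNmono ht.1)
        exact Real.rpow_le_rpow_of_nonpos
          (lt_of_lt_of_le (hR0 (k+1)) ht.1) ht.2.le (by linarith)
      have hvol : R (k+2) - R (k+1) = R (k+1) := by rw [hRsucc (k+1)]; ring
      calc ENNReal.ofReal (R (k+2) ^ (-1 - σ)) * NR1 * ENNReal.ofReal (R (k+1))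
          = (ENNReal.ofReal (R (k+2) ^ (-1 - σ)) * NR1)
              * volume (Set.Ico (R (k+1)) (R (k+2))) := by
            rw [Real.volume_Ico, hvol]
        _ = ∫⁻ _ in Set.Ico (R (k+1)) (R (k+2)),
              ENNReal.ofReal (R (k+2) ^ (-1 - σ)) * NR1 := (setLIntegral_const _ _).symm
        _ ≤ ∫⁻ t in Set.Ico (R (k+1)) (R (k+2)),
              ENNReal.ofReal (t ^ (-1 - σ)) * mixedNorm n q ((eball n x₀ t).indicator f) := by
            refine lintegral_mono_ae ?_
            rw [ae_restrict_iff' measurableSet_Ico]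
            filter_upwards with t ht
            exact hpt t ht
    calc (∫⁻ y in A k, ENNReal.ofReal (|f y| / d y ^ n))
        ≤ ENNReal.ofReal ((R k ^ n)⁻¹) * ∫⁻ y in A k, ENNReal.ofReal |f y| := by
          rw [← stepB]; exact stepA
      _ ≤ ENNReal.ofReal ((R k ^ n)⁻¹)
            * (NR1 * ENNReal.ofReal ((2 * R (k+1)) ^ ((n:ℝ) - σ))) :=
          mul_le_mul_right (le_trans stepC stepD) _
      _ ≤ ENNReal.ofReal ((2:ℝ) ^ (2 * n + 1))
            * (ENNReal.ofReal (R (k+2) ^ (-1 - σ)) * NR1 * ENNReal.ofReal (R (k+1))) := stepE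
      _ ≤ ENNReal.ofReal ((2:ℝ) ^ (2 * n + 1))
            * ∫⁻ t in Set.Ico (R (k+1)) (R (k+2)),
                ENNReal.ofReal (t ^ (-1 - σ)) * mixedNorm n q ((eball n x₀ t).indicator f) :=
          mul_le_mul_right stepF _
  -- assemble
  have hsub : (⋃ k, Set.Ico (R (k+1)) (R (k+2))) ⊆ Set.Ioi (2 * r) := by
    refine Set.iUnion_subset fun k t ht => ?_
    have h1 : 2 * r < R 1 := by
      simp only [hR, pow_one]
      linarith
    exact lt_of_lt_of_le (lt_of_lt_of_le h1 (hRmono (Nat.succ_le_succ (Nat.zero_le k)))) ht.1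
  calc (∫⁻ y in {y | 2 * r ≤ d y}, ENNReal.ofReal (|f y| / d y ^ n))
      = ∑' k, ∫⁻ y in A k, ENNReal.ofReal (|f y| / d y ^ n) := by
        rw [hcover, lintegral_iUnion hAm hAd]
    _ ≤ ∑' k, ENNReal.ofReal ((2:ℝ) ^ (2 * n + 1))
          * ∫⁻ t in Set.Ico (R (k+1)) (R (k+2)),
              ENNReal.ofReal (t ^ (-1 - σ)) * mixedNorm n q ((eball n x₀ t).indicator f) :=
        ENNReal.tsum_le_tsum key
    _ = ENNReal.ofReal ((2:ℝ) ^ (2 * n + 1))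
          * ∑' k, ∫⁻ t in Set.Ico (R (k+1)) (R (k+2)),
              ENNReal.ofReal (t ^ (-1 - σ)) * mixedNorm n q ((eball n x₀ t).indicator f) :=
        ENNReal.tsum_mul_left
    _ = ENNReal.ofReal ((2:ℝ) ^ (2 * n + 1))
          * ∫⁻ t in ⋃ k, Set.Ico (R (k+1)) (R (k+2)),
              ENNReal.ofReal (t ^ (-1 - σ)) * mixedNorm n q ((eball n x₀ t).indicator f) := by
        rw [lintegral_iUnion (fun k => measurableSet_Ico) (fun k l hkl => hIco (by omega))]
    _ ≤ ENNReal.ofReal ((2:ℝ) ^ (2 * n + 1))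
          * ∫⁻ t in Set.Ioi (2 * r),
              ENNReal.ofReal (t ^ (-1 - σ)) * mixedNorm n q ((eball n x₀ t).indicator f) :=
        mul_le_mul_right (lintegral_mono_set hsub) _
end
end

section
/- Let m ≥ 2 and let T_m satisfy the multi-sublinear size condition with constant C. Then there is a constant C′ > 0 (depending only on C, m, n) such that for every x_0 ∈ ℝ^n, every r > 0, every m-tuple f⃗ = (f_1,…,f_m) of integrable functions with compact supports all contained in the complement of B(x_0,2r), and every x ∈ B(x_0,r), one has |T_m(f⃗)(x)| ≤ C′ · Π_{i=1}^m ∫_{ℝ^n∖B(x_0,2r)} |f_i(y_i)| · |x_0−y_i|^{−n} dy_i. -/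
open MeasureTheory ENNReal Set

noncomputable section

lemma eudist_eq (n : ℕ) (x y : Fin n → ℝ) :
    eudist n x y = @dist (EuclideanSpace ℝ (Fin n)) _ (WithLp.toLp 2 x) (WithLp.toLp 2 y) := by
  rw [EuclideanSpace.dist_eq]
  simp [eudist, Real.dist_eq, sq_abs]

lemma eudist_nonneg (n : ℕ) (x y : Fin n → ℝ) : 0 ≤ eudist n x y := by
  rw [eudist_eq]; exact dist_nonneg

lemma eudist_triangle (n : ℕ) (x y z : Fin n → ℝ) :
    eudist n x z ≤ eudist n x y + eudist n y z := by
  simp only [eudist_eq]; exact dist_triangle _ _ _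

lemma eudist_continuous (n : ℕ) (x : Fin n → ℝ) :
    Continuous (fun y => eudist n x y) := by
  unfold eudist
  exact Real.continuous_sqrt.comp (by continuity)

set_option maxHeartbeats 1000000 in
theorem stmt3 (n m : ℕ) (hn : 0 < n) (hm : 2 ≤ m)
    (T : (Fin m → ((Fin n → ℝ) → ℝ)) → ((Fin n → ℝ) → ℝ))
    (C : ℝ) (hC : 0 < C) (hT : SizeCond n m T C) :
    ∃ C' : ℝ, 0 < C' ∧ ∀ (x₀ : Fin n → ℝ) (r : ℝ), 0 < r →
      ∀ f : Fin m → ((Fin n → ℝ) → ℝ),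
        (∀ i, Integrable (f i)) → (∀ i, HasCompactSupport (f i)) →
        (∀ i, Function.support (f i) ⊆ (eball n x₀ (2 * r))ᶜ) →
        ∀ x ∈ eball n x₀ r,
          |T f x| ≤ C' * ∏ i, ∫ y in (eball n x₀ (2 * r))ᶜ,
            |f i y| / eudist n x₀ y ^ n := by
  refine ⟨C * 2 ^ (m * n), by positivity, ?_⟩
  intro x₀ r hr f hint hcs hsupp x hx
  haveI : NeZero m := ⟨by omega⟩
  have hx' : eudist n x₀ x < r := hx
  -- x is not in the intersection of supports
  have hxnot : x ∉ ⋂ j, Function.support (f j) := by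
    intro h
    have h0 : x ∈ Function.support (f 0) := mem_iInter.1 h 0
    have := hsupp 0 h0
    simp only [mem_compl_iff, eball, mem_setOf_eq, not_lt] at this
    linarith
  -- define the single-variable majorants
  set gi : Fin m → (Fin n → ℝ) → ℝ :=
    fun i y => |f i y| / eudist n x₀ y ^ n with hgi
  have hgi_nonneg : ∀ i y, 0 ≤ gi i y := fun i y => by
    apply div_nonneg (abs_nonneg _)
    exact pow_nonneg (eudist_nonneg _ _ _) _
  -- each gi is integrable
  have hgi_int : ∀ i, Integrable (gi i) := by
    intro i
    have hmeas : AEStronglyMeasurable (gi i) volume := by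
      have h1 : AEStronglyMeasurable (fun y => |f i y|) volume := (hint i).1.norm
      have h2 : Measurable (fun y => (eudist n x₀ y ^ n)⁻¹) :=
        (((eudist_continuous n x₀).pow n).measurable).inv
      simpa [hgi, div_eq_mul_inv, Pi.mul_def] using h1.mul h2.aestronglyMeasurable
    refine Integrable.mono' (((hint i).norm).div_const ((2 * r) ^ n)) hmeas
      (Filter.Eventually.of_forall fun y => ?_)
    rw [Real.norm_eq_abs, abs_of_nonneg (hgi_nonneg i y)]
    by_cases hy : f i y = 0
    · simp only [hgi, hy, abs_zero, zero_div]
      positivity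
    · have hyD : 2 * r ≤ eudist n x₀ y := by
        have := hsupp i hy
        simpa [eball, not_lt] using this
      simp only [hgi, Real.norm_eq_abs]
      apply div_le_div_of_nonneg_left (abs_nonneg _) (by positivity)
      exact pow_le_pow_left₀ (by positivity) hyD n
  -- pointwise bound on the kernel integrand
  have hptwise : ∀ y : Fin m → (Fin n → ℝ),
      (∏ i, |f i (y i)|) / Real.sqrt (∑ i, eudist n x (y i) ^ 2) ^ (m * n)
        ≤ 2 ^ (m * n) * ∏ i, gi i (y i) := by
    intro y
    by_cases hz : ∃ i, f i (y i) = 0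
    · obtain ⟨i, hi⟩ := hz
      have h1 : (∏ i, |f i (y i)|) = 0 :=
        Finset.prod_eq_zero (Finset.mem_univ i) (by simp [hi])
      rw [h1, zero_div]
      exact mul_nonneg (by positivity)
        (Finset.prod_nonneg fun i _ => hgi_nonneg i (y i))
    · push_neg at hz
      have hD : ∀ i, 2 * r ≤ eudist n x₀ (y i) := fun i => by
        have := hsupp i (hz i)
        simpa [eball, not_lt] using this
      set S := Real.sqrt (∑ i, eudist n x (y i) ^ 2) with hS
      have hSnonneg : 0 ≤ S := Real.sqrt_nonneg _
      -- eudist x (y i) ≥ eudist x₀ (y i) / 2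
      have hdi : ∀ i, eudist n x₀ (y i) / 2 ≤ eudist n x (y i) := by
        intro i
        have htri := eudist_triangle n x₀ x (y i)
        have := hD i
        linarith [hx']
      -- S ≥ eudist x (y i)
      have hSi : ∀ i, eudist n x (y i) ≤ S := by
        intro i
        rw [hS]
        rw [show eudist n x (y i) = Real.sqrt (eudist n x (y i) ^ 2) from
          (Real.sqrt_sq (eudist_nonneg _ _ _)).symm]
        apply Real.sqrt_le_sqrt
        exact Finset.single_le_sum (f := fun j => eudist n x (y j) ^ 2)
          (fun j _ => sq_nonneg _) (Finset.mem_univ i)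
      -- key: ∏ D_i^n / 2^(m*n) ≤ S^(m*n)
      set Q := ∏ i, eudist n x₀ (y i) ^ n with hQ
      have hQpos : 0 < Q := Finset.prod_pos fun i _ =>
        pow_pos (lt_of_lt_of_le (by linarith) (hD i)) n
      have hkey : Q / 2 ^ (m * n) ≤ S ^ (m * n) := by
        have h1 : ∏ i : Fin m, (eudist n x₀ (y i) / 2) ^ n ≤ ∏ i : Fin m, S ^ n := by
          apply Finset.prod_le_prod
          · intro i _
            exact pow_nonneg (div_nonneg (eudist_nonneg _ _ _) (by norm_num)) n
          · intro i _
            exact pow_le_pow_left₀ (div_nonneg (eudist_nonneg _ _ _) (by norm_num))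
              ((hdi i).trans (hSi i)) n
        have h2 : ∏ i : Fin m, (eudist n x₀ (y i) / 2) ^ n = Q / 2 ^ (m * n) := by
          simp_rw [div_pow, Finset.prod_div_distrib, Finset.prod_const,
            Finset.card_univ, Fintype.card_fin, ← pow_mul, hQ, mul_comm n m]
        have h3 : ∏ i : Fin m, S ^ n = S ^ (m * n) := by
          simp [Finset.prod_const, ← pow_mul, mul_comm n m]
        rw [h2, h3] at h1
        exact h1
      have hGg : (∏ i, gi i (y i)) = (∏ i, |f i (y i)|) / Q := by
        simp [hgi, hQ, Finset.prod_div_distrib]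
      rw [hGg]
      calc (∏ i, |f i (y i)|) / S ^ (m * n)
          ≤ (∏ i, |f i (y i)|) / (Q / 2 ^ (m * n)) := by
            exact div_le_div_of_nonneg_left
              (Finset.prod_nonneg fun i _ => abs_nonneg _)
              (div_pos hQpos (by positivity)) hkey
        _ = 2 ^ (m * n) * ((∏ i, |f i (y i)|) / Q) := by
            rw [div_div_eq_mul_div]; ring
  -- the majorant is integrable on the product space
  have hGint : Integrable (fun y : Fin m → (Fin n → ℝ) =>
      2 ^ (m * n) * ∏ i, gi i (y i)) :=
    (Integrable.fintype_prod (f := fun i => gi i) hgi_int).const_mul _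
  -- apply size condition and compare integrals
  have h1 := hT f hint hcs x hxnot
  have h2 : (∫ y : Fin m → (Fin n → ℝ),
      (∏ i, |f i (y i)|) / Real.sqrt (∑ i, eudist n x (y i) ^ 2) ^ (m * n))
      ≤ ∫ y : Fin m → (Fin n → ℝ), 2 ^ (m * n) * ∏ i, gi i (y i) := by
    apply integral_mono_of_nonneg
    · exact Filter.Eventually.of_forall fun y => by
        apply div_nonneg (Finset.prod_nonneg fun i _ => abs_nonneg _)
        positivity
    · exact hGint
    · exact Filter.Eventually.of_forall hptwise
  have h3 : (∫ y : Fin m → (Fin n → ℝ), 2 ^ (m * n) * ∏ i, gi i (y i))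
      = 2 ^ (m * n) * ∏ i, ∫ y, gi i y := by
    rw [integral_const_mul, integral_fintype_prod_volume_eq_prod]
  have h4 : ∀ i, (∫ y, gi i y)
      = ∫ y in (eball n x₀ (2 * r))ᶜ, |f i y| / eudist n x₀ y ^ n := by
    intro i
    rw [setIntegral_eq_integral_of_forall_compl_eq_zero]
    intro y hy
    have : f i y = 0 := by
      by_contra hne
      exact hy (hsupp i hne)
    simp [hgi, this]
  calc |T f x| ≤ C * ∫ y : Fin m → (Fin n → ℝ),
        (∏ i, |f i (y i)|) / Real.sqrt (∑ i, eudist n x (y i) ^ 2) ^ (m * n) := h1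
    _ ≤ C * (2 ^ (m * n) * ∏ i, ∫ y, gi i y) := by
        rw [← h3]; exact mul_le_mul_of_nonneg_left (h2.trans_eq rfl) hC.le
    _ = C * 2 ^ (m * n) * ∏ i, ∫ y in (eball n x₀ (2 * r))ᶜ,
        |f i y| / eudist n x₀ y ^ n := by
        rw [← mul_assoc]
        congr 1
        exact Finset.prod_congr rfl fun i _ => h4 i
end
end
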